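/- arXiv:1601.02242 — 2 statements merged into one kernel-verified Lean document; each statement's English description precedes it below -/
import Mathlib

section
/- Let 0 < α < 1. For every w ∈ ℂ with |w| = 1, (1/(2πi)) ∫_{𝕋} 1/|τ − w|^α dτ = (α Γ(1−α) / ((2−α) Γ(1−α/2)²)) · w. -/
open Real MeasureTheory intervalIntegral Set

lemma abs_exp_sub_one (t : ℝ) :
    ‖Complex.exp (t * Complex.I) - 1‖ = 2 * |Real.sin (t / 2)| := by
  have h1 : Complex.exp (t * Complex.I) - 1
      = Complex.mk (Real.cos t - 1) (Real.sin t) := by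
    rw [Complex.exp_mul_I, Complex.ext_iff]
    simp [Complex.cos_ofReal_re, Complex.sin_ofReal_re]
  rw [h1, Complex.norm_def, Complex.normSq_mk]
  have hs : Real.sin (t / 2) ^ 2 = (1 - Real.cos t) / 2 := by
    have := Real.sin_sq_eq_half_sub (t/2)
    rw [show 2 * (t/2) = t by ring] at this; linarith [this]
  have h2 : (Real.cos t - 1) * (Real.cos t - 1) + Real.sin t * Real.sin t
      = (2 * |Real.sin (t / 2)|) ^ 2 := by
    have h3 := Real.sin_sq_add_cos_sq t
    rw [mul_pow, sq_abs, hs]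
    nlinarith
  rw [h2, Real.sqrt_sq (by positivity)]




lemma isin_half {α : ℝ} (hα0 : 0 < α) (hα1 : α < 1) :
    IntervalIntegrable (fun u => Real.sin u ^ (-α)) volume 0 (π/2) := by
  rw [intervalIntegrable_iff_integrableOn_Ioc_of_le (by positivity)]
  have hb : IntegrableOn (fun u : ℝ => (2/π)^(-α) * u ^ (-α)) (Ioc 0 (π/2)) volume := by
    have : IntervalIntegrable (fun u : ℝ => u ^ (-α)) volume 0 (π/2) :=
      intervalIntegrable_rpow' (by linarith)
    rw [intervalIntegrable_iff_integrableOn_Ioc_of_le (by positivity)] at this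
    exact this.const_mul _
  refine hb.integrable.mono' ?_ ?_
  · apply ContinuousOn.aestronglyMeasurable ?_ measurableSet_Ioc
    intro u hu
    have hsu : 0 < Real.sin u := Real.sin_pos_of_pos_of_lt_pi hu.1 (by
      have := hu.2; linarith [Real.pi_pos])
    exact ((Real.continuousAt_rpow_const _ _ (Or.inl hsu.ne')).comp
      Real.continuous_sin.continuousAt).continuousWithinAt
  · filter_upwards [ae_restrict_mem measurableSet_Ioc] with u hu
    have h1 : 2/π * u ≤ Real.sin u := Real.mul_le_sin hu.1.le hu.2
    have h2 : 0 < 2/π * u := mul_pos (by positivity) hu.1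
    rw [Real.norm_eq_abs, abs_of_nonneg (Real.rpow_nonneg (Real.sin_nonneg_of_nonneg_of_le_pi
      hu.1.le (by linarith [Real.pi_pos, hu.2]) ) _)]
    calc Real.sin u ^ (-α) ≤ (2/π * u) ^ (-α) := by
          apply Real.rpow_le_rpow_of_nonpos h2 h1 (by linarith)
      _ = (2/π)^(-α) * u ^ (-α) := Real.mul_rpow (by positivity) hu.1.le

lemma isin {α : ℝ} (hα0 : 0 < α) (hα1 : α < 1) :
    IntervalIntegrable (fun u => Real.sin u ^ (-α)) volume 0 π := by
  have h1 := isin_half hα0 hα1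
  have h2 : IntervalIntegrable (fun u => Real.sin u ^ (-α)) volume (π/2) π := by
    have := (isin_half hα0 hα1).comp_sub_left π
    simp only [sub_zero, Real.sin_pi_sub] at this
    have h := this.symm
    rwa [show π - π/2 = π/2 by ring] at h
  exact h1.trans h2

lemma ibeta {α : ℝ} (hα0 : 0 < α) (hα1 : α < 1) :
    IntegrableOn (fun x : ℝ => (x * (1 - x)) ^ ((1 - α) / 2 - 1)) (Icc (0:ℝ) 1) volume := by
  set s : ℝ := (1 - α) / 2 with hs
  have hs0 : 0 < s := by rw [hs]; linarith
  have hc : IntervalIntegrable (fun x : ℝ => (x:ℂ) ^ ((s:ℂ) - 1) * (1 - (x:ℂ)) ^ ((s:ℂ) - 1))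
      volume 0 1 := Complex.betaIntegral_convergent (by simpa using hs0) (by simpa using hs0)
  rw [intervalIntegrable_iff_integrableOn_Ioc_of_le (by norm_num)] at hc
  have heq : EqOn (fun x : ℝ => (x:ℂ) ^ ((s:ℂ) - 1) * (1 - (x:ℂ)) ^ ((s:ℂ) - 1))
      (fun x : ℝ => (((x * (1 - x)) ^ (s - 1) : ℝ) : ℂ)) (Icc (0:ℝ) 1) := by
    intro x hx
    have hx0 : (0:ℝ) ≤ x := hx.1
    have hx1 : (0:ℝ) ≤ 1 - x := by linarith [hx.2]
    simp only
    rw [Real.mul_rpow hx0 hx1, Complex.ofReal_mul,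
      Complex.ofReal_cpow hx0, Complex.ofReal_cpow hx1]
    push_cast
    ring
  have h2 : IntegrableOn (fun x : ℝ => (((x * (1 - x)) ^ (s - 1) : ℝ) : ℂ)) (Ioc (0:ℝ) 1)
      volume := hc.congr_fun (heq.mono Ioc_subset_Icc_self) measurableSet_Ioc
  have h3 : IntegrableOn (fun x : ℝ => (x * (1 - x)) ^ (s - 1)) (Ioc (0:ℝ) 1) volume := by
    have := h2.re
    simp at this
    exact this
  rwa [integrableOn_Icc_iff_integrableOn_Ioc]

lemma beta_eval {α : ℝ} (hα0 : 0 < α) (hα1 : α < 1) :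
    ∫ x in (0:ℝ)..1, (x * (1 - x)) ^ ((1 - α) / 2 - 1)
      = Real.Gamma ((1 - α) / 2) ^ 2 / Real.Gamma (1 - α) := by
  set s : ℝ := (1 - α) / 2 with hs
  have hs0 : 0 < s := by rw [hs]; linarith
  have hcast : (∫ x in (0:ℝ)..1, (x * (1 - x)) ^ (s - 1) : ℝ)
      = ((Complex.betaIntegral s s).re) := by
    rw [Complex.betaIntegral]
    rw [show (∫ x in (0:ℝ)..1, (x:ℂ) ^ ((s:ℂ) - 1) * (1 - (x:ℂ)) ^ ((s:ℂ) - 1))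
        = ∫ x in (0:ℝ)..1, (((x * (1 - x)) ^ (s - 1) : ℝ) : ℂ) from ?_]
    · rw [intervalIntegral.integral_ofReal, Complex.ofReal_re]
    · refine intervalIntegral.integral_congr fun x hx => ?_
      rw [uIcc_of_le (by norm_num : (0:ℝ) ≤ 1)] at hx
      have hx0 : (0:ℝ) ≤ x := hx.1
      have hx1 : (0:ℝ) ≤ 1 - x := by linarith [hx.2]
      rw [Real.mul_rpow hx0 hx1, Complex.ofReal_mul,
        Complex.ofReal_cpow hx0, Complex.ofReal_cpow hx1]
      push_cast
      ring
  rw [hcast]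
  have hG : Complex.Gamma s * Complex.Gamma s
      = Complex.Gamma (s + s) * Complex.betaIntegral s s :=
    Complex.Gamma_mul_Gamma_eq_betaIntegral (by simpa using hs0) (by simpa using hs0)
  have hGr : Real.Gamma (s + s) ≠ 0 := (Real.Gamma_pos_of_pos (by linarith)).ne'
  have hbeta : Complex.betaIntegral s s
      = (Real.Gamma s ^ 2 / Real.Gamma (s + s) : ℝ) := by
    have h2 : (Complex.Gamma (s + s)) = (Real.Gamma (s+s) : ℂ) := by
      rw [show ((s:ℂ) + s) = ((s + s : ℝ) : ℂ) by push_cast; ring, Complex.Gamma_ofReal]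
    have h1 : (Complex.Gamma s) = (Real.Gamma s : ℂ) := Complex.Gamma_ofReal s
    rw [h1, h2] at hG
    have hGc : (Real.Gamma (s+s) : ℂ) ≠ 0 := by exact_mod_cast hGr
    rw [show ((Real.Gamma s ^ 2 / Real.Gamma (s+s) : ℝ) : ℂ)
        = (Real.Gamma s : ℂ)^2 / (Real.Gamma (s+s) : ℂ) by push_cast; ring,
      eq_div_iff hGc]
    linear_combination -hG
  rw [hbeta, Complex.ofReal_re, show s + s = 1 - α by rw [hs]; ring]

lemma subst_eval {α : ℝ} (hα0 : 0 < α) (hα1 : α < 1) :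
    ∫ u in (0:ℝ)..π, (Real.sin u / 2) ^ (-α)
      = ∫ x in (0:ℝ)..1, (x * (1 - x)) ^ ((1 - α) / 2 - 1) := by
  set s : ℝ := (1 - α) / 2 with hs
  set f : ℝ → ℝ := fun u => Real.sin (u / 2) ^ 2 with hf
  set f' : ℝ → ℝ := fun u => Real.sin (u / 2) * Real.cos (u / 2) with hf'
  set g : ℝ → ℝ := fun x => (x * (1 - x)) ^ (s - 1) with hg
  have hpi := Real.pi_pos
  -- key pointwise identity on Icc 0 π
  have key : ∀ u ∈ Icc (0:ℝ) π, f' u * g (f u) = (Real.sin u / 2) ^ (-α) := by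
    intro u hu
    rcases eq_or_lt_of_le hu.1 with h0 | h0
    · simp only [hf, hf', hg, ← h0]
      norm_num
      rw [Real.zero_rpow (by linarith)]
    rcases eq_or_lt_of_le hu.2 with h1 | h1
    · simp only [hf, hf', hg, h1]
      rw [Real.sin_pi, Real.cos_pi_div_two, Real.sin_pi_div_two]
      norm_num
      rw [Real.zero_rpow (by linarith)]
    · have ha : 0 < Real.sin (u / 2) := Real.sin_pos_of_pos_of_lt_pi (by linarith) (by linarith)
      have hb : 0 < Real.cos (u / 2) := Real.cos_pos_of_mem_Ioo ⟨by linarith, by linarith⟩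
      have hab : 0 < Real.sin (u / 2) * Real.cos (u / 2) := mul_pos ha hb
      have hsin2 : Real.sin u = 2 * (Real.sin (u / 2) * Real.cos (u / 2)) := by
        rw [show u = 2 * (u / 2) by ring, Real.sin_two_mul]
        ring_nf
      have h1f : 1 - f u = Real.cos (u / 2) ^ 2 := by
        simp only [hf]
        have := Real.sin_sq_add_cos_sq (u / 2)
        linarith
      simp only [hf, hf', hg]
      rw [h1f]
      have hprod : Real.sin (u/2) ^ 2 * Real.cos (u/2) ^ 2
          = (Real.sin (u/2) * Real.cos (u/2)) ^ 2 := by ring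
      rw [hprod, ← Real.rpow_natCast (Real.sin (u/2) * Real.cos (u/2)) 2,
        ← Real.rpow_mul hab.le]
      rw [show Real.sin u / 2 = Real.sin (u/2) * Real.cos (u/2) by rw [hsin2]; ring,
        mul_comm (Real.sin (u/2) * Real.cos (u/2)) ((Real.sin (u/2) * Real.cos (u/2)) ^ ((2:ℕ) * (s-1) : ℝ)),
        ← Real.rpow_add_one hab.ne']
      congr 1
      push_cast
      rw [hs]
      ring
  -- derivative
  have hderiv : ∀ u : ℝ, HasDerivAt f (f' u) u := by
    intro u
    have h1 : HasDerivAt (fun u : ℝ => u / 2) (1 / 2) u := by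
      simpa using (hasDerivAt_id u).div_const 2
    have h2 : HasDerivAt (fun u : ℝ => Real.sin (u / 2)) (Real.cos (u / 2) * (1 / 2)) u :=
      h1.sin
    have h3 : HasDerivAt (fun u : ℝ => Real.sin (u / 2) ^ 2)
        (((2:ℕ):ℝ) * Real.sin (u / 2) ^ (2 - 1) * (Real.cos (u / 2) * (1 / 2))) u := h2.pow 2
    convert h3 using 1
    show Real.sin (u / 2) * Real.cos (u / 2) = _
    ring
  have himage1 : f '' Ioo 0 π ⊆ Ioo 0 1 := by
    rintro x ⟨u, hu, rfl⟩
    have ha : 0 < Real.sin (u / 2) := Real.sin_pos_of_pos_of_lt_pi (by linarith [hu.1])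
      (by linarith [hu.2])
    have ha2 : Real.sin (u / 2) < 1 := by
      have := Real.cos_pos_of_mem_Ioo (show u/2 ∈ Ioo (-(π/2)) (π/2) from
        ⟨by linarith [hu.1], by linarith [hu.2]⟩)
      nlinarith [Real.sin_sq_add_cos_sq (u/2)]
    refine ⟨by positivity, ?_⟩
    show Real.sin (u/2) ^ 2 < 1
    nlinarith
  have himage2 : f '' uIcc 0 π ⊆ Icc 0 1 := by
    rintro x ⟨u, hu, rfl⟩
    simp only [hf]
    constructor
    · positivity
    · nlinarith [Real.neg_one_le_sin (u/2), Real.sin_le_one (u/2)]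
  have hcal := intervalIntegral.integral_comp_smul_deriv''' (a := 0) (b := π)
    (f := f) (f' := f') (g := g)
    (fun u _ => (hderiv u).continuousAt.continuousWithinAt)
    (fun u hu => (hderiv u).hasDerivWithinAt)
    ?_ ?_ ?_
  · have hf0 : f 0 = 0 := by simp [hf]
    have hfπ : f π = 1 := by simp [hf]
    rw [hf0, hfπ] at hcal
    rw [← hcal]
    exact intervalIntegral.integral_congr fun u hu => by
      rw [uIcc_of_le hpi.le] at hu
      simpa [smul_eq_mul] using (key u hu).symm
  · -- continuity of g on image of Ioo
    refine ContinuousOn.mono ?_ (by simpa [min_eq_left hpi.le, max_eq_right hpi.le]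
      using himage1)
    refine ContinuousOn.rpow_const (by fun_prop) fun x hx => Or.inl ?_
    have : 0 < x * (1 - x) := mul_pos hx.1 (by linarith [hx.2])
    exact this.ne'
  · exact (ibeta hα0 hα1).mono_set himage2
  · -- integrability of f' • g ∘ f
    have hint : IntervalIntegrable (fun u => (Real.sin u / 2) ^ (-α)) volume 0 π := by
      have h1 : IntervalIntegrable (fun u => Real.sin u ^ (-α) / 2 ^ (-α)) volume 0 π :=
        (isin hα0 hα1).div_const _
      rw [intervalIntegrable_iff_integrableOn_Ioc_of_le hpi.le] at h1 ⊢
      refine h1.congr_fun (fun u hu => ?_) measurableSet_Ioc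
      rw [Real.div_rpow (Real.sin_nonneg_of_nonneg_of_le_pi hu.1.le hu.2) (by norm_num)]
    rw [intervalIntegrable_iff_integrableOn_Ioc_of_le hpi.le] at hint
    rw [uIcc_of_le hpi.le, integrableOn_Icc_iff_integrableOn_Ioc]
    exact hint.congr_fun (fun u hu => by
      simpa [smul_eq_mul] using (key u (Ioc_subset_Icc_self hu)).symm) measurableSet_Ioc

lemma K_eval {α : ℝ} (hα0 : 0 < α) (hα1 : α < 1) :
    ∫ u in (0:ℝ)..π, Real.sin u ^ (-α)
      = 2 ^ (-α) * (Real.Gamma ((1 - α) / 2) ^ 2 / Real.Gamma (1 - α)) := by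
  rw [← beta_eval hα0 hα1, ← subst_eval hα0 hα1, ← intervalIntegral.integral_const_mul]
  refine intervalIntegral.integral_congr fun u hu => ?_
  rw [uIcc_of_le Real.pi_pos.le] at hu
  have hsu : 0 ≤ Real.sin u := Real.sin_nonneg_of_nonneg_of_le_pi hu.1 hu.2
  rw [Real.div_rpow hsu (by norm_num : (0:ℝ) ≤ 2), Real.rpow_neg (by norm_num : (0:ℝ) ≤ 2)]
  field_simp

lemma K2_rel {α : ℝ} (hα0 : 0 < α) (hα1 : α < 1) :
    (2 - α) * ∫ u in (0:ℝ)..π, Real.sin u ^ (2 - α)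
      = (1 - α) * ∫ u in (0:ℝ)..π, Real.sin u ^ (-α) := by
  have hpi := Real.pi_pos
  -- continuity of positive-exponent sin powers
  have hcont : ∀ q : ℝ, 0 < q → Continuous fun u : ℝ => Real.sin u ^ q := by
    intro q hq
    rw [continuous_iff_continuousAt]
    exact fun u => (Real.continuousAt_rpow_const _ _ (Or.inr hq.le)).comp
      Real.continuous_sin.continuousAt
  have hint2 : IntervalIntegrable (fun u => Real.sin u ^ (2 - α)) volume 0 π :=
    ((hcont _ (by linarith)).intervalIntegrable 0 π)
  have hint0 := isin hα0 hα1
  -- FTC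
  set Φ : ℝ → ℝ := fun u => -Real.cos u * Real.sin u ^ (1 - α) with hΦ
  set φ : ℝ → ℝ := fun u => Real.sin u * Real.sin u ^ (1 - α) +
      -Real.cos u * ((1 - α) * Real.sin u ^ (-α) * Real.cos u) with hφ
  have hder : ∀ u ∈ Ioo (0:ℝ) π, HasDerivAt Φ (φ u) u := by
    intro u hu
    have hsu : 0 < Real.sin u := Real.sin_pos_of_pos_of_lt_pi hu.1 hu.2
    have h1 : HasDerivAt (fun u : ℝ => -Real.cos u) (Real.sin u) u := by
      have := (Real.hasDerivAt_cos u).neg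
      simp only [neg_neg] at this
      exact this
    have h2 : HasDerivAt (fun u : ℝ => Real.sin u ^ (1 - α))
        ((1 - α) * Real.sin u ^ (1 - α - 1) * Real.cos u) u := by
      have := (Real.hasDerivAt_rpow_const (x := Real.sin u) (p := 1 - α)
        (Or.inl hsu.ne')).comp u (Real.hasDerivAt_sin u)
      exact this
    have h3 := h1.mul h2
    rw [show (1:ℝ) - α - 1 = -α by ring] at h3
    rw [hΦ]
    exact h3
  have hcontΦ : ContinuousOn Φ (uIcc 0 π) :=
    ((Real.continuous_cos.neg.mul (hcont _ (by linarith))).continuousOn)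
  -- φ agrees with the nice expression on Icc 0 π
  have hkey : ∀ u ∈ Icc (0:ℝ) π, φ u = Real.sin u ^ (2 - α)
      - (1 - α) * (Real.sin u ^ (-α) - Real.sin u ^ (2 - α)) := by
    intro u hu
    have hsu : 0 ≤ Real.sin u := Real.sin_nonneg_of_nonneg_of_le_pi hu.1 hu.2
    rcases eq_or_lt_of_le hsu with h0 | h0
    · simp only [hφ, ← h0]
      rw [Real.zero_rpow (by linarith : (1:ℝ) - α ≠ 0),
        Real.zero_rpow (by linarith : -α ≠ 0),
        Real.zero_rpow (by linarith : (2:ℝ) - α ≠ 0)]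
      ring
    · have e1 : Real.sin u * Real.sin u ^ (1 - α) = Real.sin u ^ (2 - α) := by
        nth_rewrite 1 [← Real.rpow_one (Real.sin u)]
        rw [← Real.rpow_add h0]
        congr 1
        ring
      have e3 : Real.cos u ^ 2 = 1 - Real.sin u ^ 2 := by
        nlinarith [Real.sin_sq_add_cos_sq u]
      have e4 : Real.sin u ^ (2:ℕ) * Real.sin u ^ (-α) = Real.sin u ^ (2 - α) := by
        rw [← Real.rpow_natCast (Real.sin u) 2, ← Real.rpow_add h0]
        congr 1
      simp only [hφ]
      rw [e1]
      have e4' : Real.sin u ^ 2 * Real.sin u ^ (-α) = Real.sin u ^ (2 - α) := by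
        rw [show Real.sin u ^ 2 = Real.sin u ^ (2:ℕ) by norm_num]
        exact e4
      linear_combination (-(1 - α) * Real.sin u ^ (-α)) * e3 + (1 - α) * e4'
  have hFTC := intervalIntegral.integral_eq_sub_of_hasDeriv_right hcontΦ
    (fun u hu => by
      rw [min_eq_left hpi.le, max_eq_right hpi.le] at hu
      exact (hder u hu).hasDerivWithinAt)
    (by
      -- integrability of φ
      have : IntervalIntegrable (fun u => Real.sin u ^ (2 - α)
          - (1 - α) * (Real.sin u ^ (-α) - Real.sin u ^ (2 - α))) volume 0 π :=
        hint2.sub ((hint0.sub hint2).const_mul _)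
      rw [intervalIntegrable_iff_integrableOn_Ioc_of_le hpi.le] at this ⊢
      exact this.congr_fun (fun u hu => (hkey u (Ioc_subset_Icc_self hu)).symm)
        measurableSet_Ioc)
  have hΦ0 : Φ 0 = 0 := by
    simp [hΦ, Real.zero_rpow (by linarith : (1:ℝ) - α ≠ 0)]
  have hΦπ : Φ π = 0 := by
    simp [hΦ, Real.zero_rpow (by linarith : (1:ℝ) - α ≠ 0)]
  rw [hΦ0, hΦπ, sub_zero] at hFTC
  have hsplit : ∫ u in (0:ℝ)..π, φ u = (∫ u in (0:ℝ)..π, Real.sin u ^ (2 - α))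
      - (1 - α) * ((∫ u in (0:ℝ)..π, Real.sin u ^ (-α))
        - ∫ u in (0:ℝ)..π, Real.sin u ^ (2 - α)) := by
    rw [show (∫ u in (0:ℝ)..π, φ u) = ∫ u in (0:ℝ)..π, (Real.sin u ^ (2 - α)
        - (1 - α) * (Real.sin u ^ (-α) - Real.sin u ^ (2 - α))) from
      intervalIntegral.integral_congr fun u hu => hkey u (by rwa [uIcc_of_le hpi.le] at hu)]
    rw [intervalIntegral.integral_sub hint2 ((hint0.sub hint2).const_mul _),
      intervalIntegral.integral_const_mul, intervalIntegral.integral_sub hint0 hint2]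
  rw [hsplit] at hFTC
  linarith [hFTC]

lemma A_eval {α : ℝ} (hα0 : 0 < α) (hα1 : α < 1) :
    ∫ t in (0:ℝ)..(2*π), Real.cos t * (2 * Real.sin (t/2)) ^ (-α)
      = 2 * π * (α * Real.Gamma (1 - α) / ((2 - α) * Real.Gamma (1 - α / 2) ^ 2)) := by
  have hpi := Real.pi_pos
  set f : ℝ → ℝ := fun t => Real.cos t * (2 * Real.sin (t/2)) ^ (-α) with hf
  have hsub := intervalIntegral.integral_comp_mul_left (a := 0) (b := π) (c := 2) f two_ne_zero
  rw [mul_zero] at hsub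
  have hA : ∫ t in (0:ℝ)..(2*π), f t = 2 * ∫ u in (0:ℝ)..π, f (2 * u) := by
    rw [hsub, smul_eq_mul]
    ring
  -- pointwise simplification of f (2u)
  have hcont : Continuous fun u : ℝ => Real.sin u ^ (2 - α) := by
    rw [continuous_iff_continuousAt]
    exact fun u => (Real.continuousAt_rpow_const _ _ (Or.inr (by linarith))).comp
      Real.continuous_sin.continuousAt
  have hint2 : IntervalIntegrable (fun u => Real.sin u ^ (2 - α)) volume 0 π :=
    hcont.intervalIntegrable 0 π
  have hint0 := isin hα0 hα1
  have hpt : ∀ u ∈ Icc (0:ℝ) π, f (2 * u)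
      = 2 ^ (-α) * (Real.sin u ^ (-α) - 2 * Real.sin u ^ (2 - α)) := by
    intro u hu
    have hsu : 0 ≤ Real.sin u := Real.sin_nonneg_of_nonneg_of_le_pi hu.1 hu.2
    have hc2 : Real.cos (2 * u) = 1 - 2 * Real.sin u ^ 2 := by
      rw [Real.cos_two_mul]
      nlinarith [Real.sin_sq_add_cos_sq u]
    have hm : (2 * Real.sin u) ^ (-α) = 2 ^ (-α) * Real.sin u ^ (-α) :=
      Real.mul_rpow (by norm_num) hsu
    simp only [hf]
    rw [show (2 * u) / 2 = u by ring, hc2, hm]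
    rcases eq_or_lt_of_le hsu with h0 | h0
    · rw [← h0, Real.zero_rpow (by linarith : -α ≠ 0),
        Real.zero_rpow (by linarith : (2:ℝ) - α ≠ 0)]
      ring
    · have e4 : Real.sin u ^ 2 * Real.sin u ^ (-α) = Real.sin u ^ (2 - α) := by
        rw [show Real.sin u ^ 2 = Real.sin u ^ ((2:ℕ):ℝ) by
          rw [Real.rpow_natCast], ← Real.rpow_add h0]
        congr 1
      linear_combination (2:ℝ) ^ (-α) * Real.sin u ^ (-α) * hc2 * 0 +
        (-2 * (2:ℝ) ^ (-α)) * e4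
  have hmid : ∫ u in (0:ℝ)..π, f (2 * u)
      = 2 ^ (-α) * ((∫ u in (0:ℝ)..π, Real.sin u ^ (-α))
        - 2 * ∫ u in (0:ℝ)..π, Real.sin u ^ (2 - α)) := by
    rw [show (∫ u in (0:ℝ)..π, f (2*u)) = ∫ u in (0:ℝ)..π,
        2 ^ (-α) * (Real.sin u ^ (-α) - 2 * Real.sin u ^ (2 - α)) from
      intervalIntegral.integral_congr fun u hu => hpt u (by rwa [uIcc_of_le hpi.le] at hu)]
    rw [intervalIntegral.integral_const_mul,
      intervalIntegral.integral_sub hint0 (hint2.const_mul 2),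
      intervalIntegral.integral_const_mul]
  set K : ℝ := ∫ u in (0:ℝ)..π, Real.sin u ^ (-α) with hK
  set K2 : ℝ := ∫ u in (0:ℝ)..π, Real.sin u ^ (2 - α) with hK2
  rw [hA, hmid]
  have hrel := K2_rel hα0 hα1
  have hKval := K_eval hα0 hα1
  -- Gamma facts
  have hdup := Real.Gamma_mul_Gamma_add_half ((1 - α)/2)
  rw [show (1 - α)/2 + 1/2 = 1 - α/2 by ring, show 2 * ((1 - α)/2) = 1 - α by ring,
    show 1 - (1 - α) = α by ring] at hdup
  rw [← hK] at hKval
  rw [← hK, ← hK2] at hrel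
  have hG1 : 0 < Real.Gamma ((1 - α)/2) := Real.Gamma_pos_of_pos (by linarith)
  have hG2 : 0 < Real.Gamma (1 - α/2) := Real.Gamma_pos_of_pos (by linarith)
  have hG3 : 0 < Real.Gamma (1 - α) := Real.Gamma_pos_of_pos (by linarith)
  have hP : Real.sqrt π ^ 2 = π := Real.sq_sqrt hpi.le
  have hab : (2:ℝ) ^ (-α) * (2:ℝ) ^ α = 1 := by
    rw [← Real.rpow_add (by norm_num : (0:ℝ) < 2)]
    norm_num
  have h2a : (2 - α) ≠ 0 := by linarith
  have hKv : K = 2 ^ (-α) * (Real.Gamma ((1 - α)/2) ^ 2 / Real.Gamma (1 - α)) := hKval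
  have hK2v : K2 = (1 - α) * K / (2 - α) := by
    field_simp
    linarith [hrel]
  have hKK : K - 2 * K2 = α * K / (2 - α) := by
    rw [hK2v]; field_simp; ring
  have hh : (2:ℝ)^(-α) * (Real.Gamma ((1 - α)/2) * Real.Gamma (1 - α/2))
      = Real.Gamma (1 - α) * √π := by
    rw [hdup]
    linear_combination (Real.Gamma (1 - α) * √π) * hab
  have key : ((2:ℝ)^(-α))^2 * (Real.Gamma ((1 - α)/2)^2 * Real.Gamma (1 - α/2)^2)
      = π * Real.Gamma (1 - α)^2 := by
    linear_combination ((2:ℝ)^(-α) * (Real.Gamma ((1 - α)/2) * Real.Gamma (1 - α/2))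
      + Real.Gamma (1 - α) * √π) * hh + Real.Gamma (1 - α)^2 * hP
  rw [hKK, hKv]
  set G1 := Real.Gamma ((1 - α)/2) with hg1
  set G2 := Real.Gamma (1 - α/2) with hg2
  set G3 := Real.Gamma (1 - α) with hg3
  set b := (2:ℝ)^(-α) with hb
  field_simp
  linear_combination key

lemma ofReal_intervalIntegrable {f : ℝ → ℝ} {a b : ℝ}
    (hf : IntervalIntegrable f volume a b) :
    IntervalIntegrable (fun x => (f x : ℂ)) volume a b :=
  ⟨hf.1.ofReal, hf.2.ofReal⟩

lemma IR {α : ℝ} (hα0 : 0 < α) (hα1 : α < 1) :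
    IntervalIntegrable (fun t => (2 * Real.sin (t/2)) ^ (-α)) volume 0 (2*π) := by
  have hpi := Real.pi_pos
  have h := (isin hα0 hα1).comp_mul_left (c := 1/2)
  rw [show (0:ℝ)/(1/2) = 0 by norm_num, show π/(1/2) = 2*π by ring] at h
  have h2 := h.const_mul ((2:ℝ) ^ (-α))
  rw [intervalIntegrable_iff_integrableOn_Ioc_of_le (by linarith)] at h2 ⊢
  refine h2.congr_fun (fun t ht => ?_) measurableSet_Ioc
  have hs : 0 ≤ Real.sin (t/2) :=
    Real.sin_nonneg_of_nonneg_of_le_pi (by linarith [ht.1]) (by linarith [ht.2])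
  rw [Real.mul_rpow (by norm_num) hs]
  ring_nf

lemma sin_part {α : ℝ} (hα0 : 0 < α) (hα1 : α < 1) :
    ∫ t in (0:ℝ)..(2*π), Real.sin t * (2 * Real.sin (t/2)) ^ (-α) = 0 := by
  have hpi := Real.pi_pos
  set q : ℝ → ℝ := fun t => Real.sin t * (2 * Real.sin (t/2)) ^ (-α) with hq
  have hIq : IntervalIntegrable q volume 0 (2*π) :=
    (IR hα0 hα1).continuousOn_mul Real.continuous_sin.continuousOn
  have hIq1 : IntervalIntegrable q volume 0 π := by
    apply hIq.mono_set
    rw [uIcc_of_le hpi.le, uIcc_of_le (by linarith)]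
    exact Icc_subset_Icc le_rfl (by linarith)
  have hIq2 : IntervalIntegrable q volume π (2*π) := by
    apply hIq.mono_set
    rw [uIcc_of_le (by linarith), uIcc_of_le (by linarith)]
    exact Icc_subset_Icc (by linarith) le_rfl
  have hadj := intervalIntegral.integral_add_adjacent_intervals hIq1 hIq2
  have hsymm : ∀ t : ℝ, q (2*π - t) = -q t := by
    intro t
    simp only [hq]
    have h1 : Real.sin (2*π - t) = -Real.sin t := by
      rw [Real.sin_sub]
      simp [Real.sin_two_pi, Real.cos_two_pi]
    have h2 : Real.sin ((2*π - t)/2) = Real.sin (t/2) := by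
      rw [show (2*π - t)/2 = π - t/2 by ring, Real.sin_pi_sub]
    rw [h1, h2]
    ring
  have h3 : ∫ t in (π:ℝ)..(2*π), q t = - ∫ t in (0:ℝ)..π, q t := by
    have h4 := intervalIntegral.integral_comp_sub_left (a := 0) (b := π) q (2*π)
    rw [show 2*π - π = π by ring, show 2*π - 0 = 2*π by ring] at h4
    rw [← h4]
    rw [show (∫ t in (0:ℝ)..π, q (2*π - t)) = ∫ t in (0:ℝ)..π, -q t from
      intervalIntegral.integral_congr fun t _ => hsymm t]
    rw [intervalIntegral.integral_neg]
  rw [← hadj, h3]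
  ring

/-- Mean value of a function over the positively oriented unit circle:
`(1/(2πi)) ∫_𝕋 g(τ) dτ`. -/
noncomputable def circAvg (g : ℂ → ℂ) : ℂ :=
  (2 * (Real.pi : ℂ) * Complex.I)⁻¹ * ∮ τ in C(0, 1), g τ


theorem stmt4 (α : ℝ) (hα0 : 0 < α) (hα1 : α < 1) (w : ℂ) (hw : ‖w‖ = 1) :
    circAvg (fun τ => 1 / ((‖τ - w‖ ^ α : ℝ) : ℂ)) =
      ((α * Real.Gamma (1 - α) / ((2 - α) * Real.Gamma (1 - α / 2) ^ 2) : ℝ) : ℂ) * w := by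
  have hpi := Real.pi_pos
  have hw' : ‖w‖ = 1 := hw
  set φ : ℝ := Complex.arg w with hφ
  have hwexp : Complex.exp (φ * Complex.I) = w := by
    have := Complex.norm_mul_exp_arg_mul_I w
    rwa [hw', Complex.ofReal_one, one_mul] at this
  set g : ℂ → ℂ := fun τ => 1 / ((‖τ - w‖ ^ α : ℝ) : ℂ) with hg
  set H : ℝ → ℂ := fun t => Complex.exp (t * Complex.I) * g (Complex.exp (t * Complex.I))
    with hH
  -- circle integral to interval integral
  have hcirc : (∮ τ in C(0, 1), g τ) = Complex.I * ∫ t in (0:ℝ)..(2*π), H t := by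
    rw [circleIntegral]
    rw [show (∫ θ in (0:ℝ)..2*π, deriv (circleMap 0 1) θ • g (circleMap 0 1 θ))
        = ∫ θ in (0:ℝ)..2*π, Complex.I * H θ from
      intervalIntegral.integral_congr fun θ _ => by
        simp only [deriv_circleMap, circleMap, hH, Complex.ofReal_one, Complex.ofReal_zero,
          zero_add, one_mul, smul_eq_mul]
        ring]
    rw [intervalIntegral.integral_const_mul]
  -- periodicity and shift
  have hper : Function.Periodic H (2*π) := by
    intro t
    have : Complex.exp ((↑(t + 2*π)) * Complex.I) = Complex.exp (t * Complex.I) := by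
      push_cast
      rw [add_mul, Complex.exp_add]
      simp [Complex.exp_two_pi_mul_I]
    simp only [hH, this]
  have hshift : (∫ t in (0:ℝ)..(2*π), H t) = ∫ t in (0:ℝ)..(2*π), H (t + φ) := by
    have h1 := hper.intervalIntegral_add_eq 0 φ
    rw [zero_add] at h1
    rw [h1, intervalIntegral.integral_comp_add_right (fun t => H t) φ, zero_add,
      add_comm φ (2*π)]
  -- pointwise: H (t + φ) = w * G t
  set G : ℝ → ℂ := fun t => Complex.exp (t * Complex.I) *
      (((2 * |Real.sin (t/2)|) ^ (-α) : ℝ) : ℂ) with hG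
  have hHG : ∀ t : ℝ, H (t + φ) = w * G t := by
    intro t
    have hexp : Complex.exp ((↑(t + φ)) * Complex.I)
        = Complex.exp (t * Complex.I) * w := by
      push_cast
      rw [add_mul, Complex.exp_add, hwexp]
    have habs : ‖Complex.exp (t * Complex.I) * w - w‖
        = 2 * |Real.sin (t/2)| := by
      rw [show Complex.exp (t * Complex.I) * w - w = (Complex.exp (t * Complex.I) - 1) * w
          by ring, norm_mul, hw', mul_one, abs_exp_sub_one]
    simp only [hH, hG, hg, hexp, habs]
    rw [show (2 * |Real.sin (t/2)|) ^ (-α) = ((2 * |Real.sin (t/2)|) ^ α)⁻¹ from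
      Real.rpow_neg (by positivity) α]
    push_cast
    field_simp
  -- split G into real and imaginary parts
  set R : ℝ → ℝ := fun t => (2 * |Real.sin (t/2)|) ^ (-α) with hR
  have hIR' : IntervalIntegrable R volume 0 (2*π) := by
    have h := IR hα0 hα1
    rw [intervalIntegrable_iff_integrableOn_Ioc_of_le (by linarith)] at h ⊢
    refine h.congr_fun (fun t ht => ?_) measurableSet_Ioc
    simp only [hR]
    rw [abs_of_nonneg (Real.sin_nonneg_of_nonneg_of_le_pi (by linarith [ht.1])
      (by linarith [ht.2]))]
  have hIcos : IntervalIntegrable (fun t => Real.cos t * R t) volume 0 (2*π) :=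
    hIR'.continuousOn_mul Real.continuous_cos.continuousOn
  have hIsin : IntervalIntegrable (fun t => Real.sin t * R t) volume 0 (2*π) :=
    hIR'.continuousOn_mul Real.continuous_sin.continuousOn
  have hGsplit : (∫ t in (0:ℝ)..(2*π), G t)
      = ((∫ t in (0:ℝ)..(2*π), Real.cos t * R t : ℝ) : ℂ)
        + ((∫ t in (0:ℝ)..(2*π), Real.sin t * R t : ℝ) : ℂ) * Complex.I := by
    rw [show (∫ t in (0:ℝ)..(2*π), G t) = ∫ t in (0:ℝ)..(2*π),
        ((Real.cos t * R t : ℝ) : ℂ) + ((Real.sin t * R t : ℝ) : ℂ) * Complex.I from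
      intervalIntegral.integral_congr fun t _ => by
        simp only [hG, hR, Complex.exp_mul_I, ← Complex.ofReal_cos, ← Complex.ofReal_sin]
        push_cast
        ring]
    rw [intervalIntegral.integral_add (ofReal_intervalIntegrable hIcos)
      ((ofReal_intervalIntegrable hIsin).mul_const Complex.I),
      intervalIntegral.integral_mul_const, intervalIntegral.integral_ofReal,
      intervalIntegral.integral_ofReal]
  -- evaluate the real integrals
  set c : ℝ := α * Real.Gamma (1 - α) / ((2 - α) * Real.Gamma (1 - α / 2) ^ 2) with hc
  have hcosval : (∫ t in (0:ℝ)..(2*π), Real.cos t * R t)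
      = 2 * π * c := by
    rw [hc, ← A_eval hα0 hα1]
    refine intervalIntegral.integral_congr fun t ht => ?_
    rw [uIcc_of_le (by linarith)] at ht
    simp only [hR]
    rw [abs_of_nonneg (Real.sin_nonneg_of_nonneg_of_le_pi (by linarith [ht.1])
      (by linarith [ht.2]))]
  have hsinval : (∫ t in (0:ℝ)..(2*π), Real.sin t * R t) = 0 := by
    have heq : (∫ t in (0:ℝ)..(2*π), Real.sin t * R t)
        = ∫ t in (0:ℝ)..(2*π), Real.sin t * (2 * Real.sin (t/2)) ^ (-α) := by
      refine intervalIntegral.integral_congr fun t ht => ?_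
      rw [uIcc_of_le (by linarith)] at ht
      simp only [hR]
      rw [abs_of_nonneg (Real.sin_nonneg_of_nonneg_of_le_pi (by linarith [ht.1])
        (by linarith [ht.2]))]
    rw [heq]
    exact sin_part hα0 hα1
  -- put everything together
  rw [circAvg, hcirc, hshift,
    show (∫ t in (0:ℝ)..(2*π), H (t + φ)) = ∫ t in (0:ℝ)..(2*π), w * G t from
      intervalIntegral.integral_congr fun t _ => hHG t,
    intervalIntegral.integral_const_mul, hGsplit, hcosval, hsinval]
  have hπne : ((π : ℝ) : ℂ) ≠ 0 := Complex.ofReal_ne_zero.mpr Real.pi_ne_zero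
  rw [Complex.ofReal_zero, zero_mul, add_zero,
    show ((2 * π * c : ℝ) : ℂ) = 2 * (π:ℝ) * (c:ℝ) by push_cast; ring]
  field_simp
end

section
/- Let 0 < α < 1 and let n ≥ 1 be an integer. Then the following Pochhammer identity holds: [1 − (α/2)_n/(−α/2)_n] + ((1+α/2)/(1−α/2))·[1 − (2+α/2)_n/(2−α/2)_n] − (4n/α)·(α/2)_n/(1−α/2)_n + 4n/(2−α) = 2(1+n)/(1−α/2) − (1+α/2)_n/(1−α/2)_n − (1+α/2)_{n+1}/(1−α/2)_{n+1}. -/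
/-- The Pochhammer symbol `(x)_n = x (x+1) ⋯ (x+n-1)`. -/
noncomputable def poch (x : ℝ) (n : ℕ) : ℝ := (ascPochhammer ℝ n).eval x

lemma poch_succ_left (x : ℝ) (n : ℕ) : poch x (n+1) = x * poch (x+1) n := by
  simp [poch, ascPochhammer_succ_left, Polynomial.eval_comp]

lemma poch_succ_right (x : ℝ) (n : ℕ) : poch x (n+1) = poch x n * (x + n) := by
  simp [poch, ascPochhammer_succ_right]

lemma poch_pos (x : ℝ) (hx : 0 < x) (n : ℕ) : 0 < poch x n := by
  induction n with
  | zero => simp [poch]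
  | succ k ih =>
    rw [poch_succ_right]
    have : (0:ℝ) ≤ k := Nat.cast_nonneg k
    nlinarith

set_option maxHeartbeats 4000000 in
theorem stmt17 (α : ℝ) (hα0 : 0 < α) (hα1 : α < 1) (n : ℕ) (hn : 1 ≤ n) :
    (1 - poch (α / 2) n / poch (-(α / 2)) n) +
        ((1 + α / 2) / (1 - α / 2)) * (1 - poch (2 + α / 2) n / poch (2 - α / 2) n) -
        (4 * n / α) * (poch (α / 2) n / poch (1 - α / 2) n) + 4 * n / (2 - α) =
      2 * (1 + (n : ℝ)) / (1 - α / 2) - poch (1 + α / 2) n / poch (1 - α / 2) n -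
        poch (1 + α / 2) (n + 1) / poch (1 - α / 2) (n + 1) := by
  obtain ⟨m, rfl⟩ : ∃ m, n = m + 1 := ⟨n - 1, by omega⟩
  obtain ⟨b, rfl⟩ : ∃ b, α = 2 * b := ⟨α / 2, by ring⟩
  rw [show (2 * b / 2 : ℝ) = b by ring]
  have hb0 : 0 < b := by linarith
  have hb1 : b < 1/2 := by linarith
  have hb : b ≠ 0 := ne_of_gt hb0
  have h1b : (1:ℝ) + b ≠ 0 := by linarith
  have h1mb : (1:ℝ) - b ≠ 0 := by linarith
  have h22 : (2:ℝ) - 2 * b ≠ 0 := by linarith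
  have hmnn : (0:ℝ) ≤ (m:ℝ) := Nat.cast_nonneg m
  have hApos : 0 < poch (1 + b) m := poch_pos _ (by linarith) m
  have hBpos : 0 < poch (1 - b) m := poch_pos _ (by linarith) m
  obtain ⟨A, hAdef⟩ : ∃ A, poch (1 + b) m = A := ⟨_, rfl⟩
  obtain ⟨B, hBdef⟩ : ∃ B, poch (1 - b) m = B := ⟨_, rfl⟩
  rw [hAdef] at hApos
  rw [hBdef] at hBpos
  have hA : A ≠ 0 := ne_of_gt hApos
  have hB : B ≠ 0 := ne_of_gt hBpos
  have hx1 : (1:ℝ) + b + m ≠ 0 := by positivity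
  have hx2 : (1:ℝ) + b + m + 1 ≠ 0 := by positivity
  have hx3 : (1:ℝ) - b + m ≠ 0 := by nlinarith
  have hx4 : (1:ℝ) - b + m + 1 ≠ 0 := by nlinarith
  have hP1 : poch b (m+1) = b * A := by
    rw [poch_succ_left, add_comm b 1, hAdef]
  have hP2 : poch (-b) (m+1) = -b * B := by
    rw [poch_succ_left, show -b + 1 = 1 - b by ring, hBdef]
  have hP6 : poch (1 + b) (m+1) = A * (1 + b + m) := by
    rw [poch_succ_right, hAdef]
  have hP5 : poch (1 - b) (m+1) = B * (1 - b + m) := by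
    rw [poch_succ_right, hBdef]
  have hP7 : poch (1 + b) (m+1+1) = A * (1 + b + m) * (1 + b + m + 1) := by
    rw [poch_succ_right, hP6]; push_cast; ring
  have hP8 : poch (1 - b) (m+1+1) = B * (1 - b + m) * (1 - b + m + 1) := by
    rw [poch_succ_right, hP5]; push_cast; ring
  have hP3 : poch (2 + b) (m+1) * (1 + b) = A * (1 + b + m) * (1 + b + m + 1) := by
    have e1 : poch (1 + b) (m+1+1) = (1 + b) * poch (2 + b) (m+1) := by
      rw [poch_succ_left, show (1:ℝ) + b + 1 = 2 + b by ring]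
    rw [hP7] at e1; linarith
  have hP4 : poch (2 - b) (m+1) * (1 - b) = B * (1 - b + m) * (1 - b + m + 1) := by
    have e1 : poch (1 - b) (m+1+1) = (1 - b) * poch (2 - b) (m+1) := by
      rw [poch_succ_left, show (1:ℝ) - b + 1 = 2 - b by ring]
    rw [hP8] at e1; linarith
  have t1 : poch b (m+1) / poch (-b) (m+1) = -(A/B) := by
    rw [hP1, hP2]; field_simp
  have t2 : poch (2 + b) (m+1) / poch (2 - b) (m+1)
      = (A * (1 + b + m) * (1 + b + m + 1) * (1 - b))
        / (B * (1 - b + m) * (1 - b + m + 1) * (1 + b)) := by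
    have hQ : poch (2 - b) (m+1) ≠ 0 := by
      intro h
      rw [h, zero_mul] at hP4
      exact mul_ne_zero (mul_ne_zero hB hx3) hx4 hP4.symm
    rw [div_eq_div_iff hQ (mul_ne_zero (mul_ne_zero (mul_ne_zero hB hx3) hx4) h1b)]
    linear_combination (B * (1 - b + (m:ℝ)) * (1 - b + (m:ℝ) + 1)) * hP3 -
      (A * (1 + b + (m:ℝ)) * (1 + b + (m:ℝ) + 1)) * hP4
  have t3 : poch b (m+1) / poch (1 - b) (m+1) = (b * A) / (B * (1 - b + m)) := by
    rw [hP1, hP5]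
  have t4 : poch (1 + b) (m+1) / poch (1 - b) (m+1)
      = (A * (1 + b + m)) / (B * (1 - b + m)) := by
    rw [hP6, hP5]
  have t5 : poch (1 + b) (m+1+1) / poch (1 - b) (m+1+1)
      = (A * (1 + b + m) * (1 + b + m + 1)) / (B * (1 - b + m) * (1 - b + m + 1)) := by
    rw [hP7, hP8]
  rw [t1, t2, t3, t4, t5]
  push_cast
  field_simp
  ring
end
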